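/- arXiv:2310.08385 — 3 statements merged into one kernel-verified Lean document; each statement's English description precedes it below -/
import Mathlib

section
/- Let B = A⁻¹ where A is an n×n lower triangular complex matrix with diagonal entries 1 and all subdiagonal entries of absolute value at most 1. Then |B_{j,k}| ≤ 2^{j−k−1} for all 1 ≤ k < j ≤ n. -/
open Finset

/-- geometric sum over a ℕ-interval -/
lemma geo_sum_Ioo (a b : ℕ) (hab : a < b) :
    ∑ i ∈ Finset.Ioo a b, (2 : ℝ) ^ (i - a - 1) = 2 ^ (b - a - 1) - 1 := by
  induction b with
  | zero => omega
  | succ b ih =>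
    rcases Nat.lt_or_ge a b with h | h
    · rw [show Finset.Ioo a (b + 1) = insert b (Finset.Ioo a b) by
        ext x; simp only [Finset.mem_Ioo, Finset.mem_insert]; omega]
      rw [Finset.sum_insert (by simp)]
      rw [ih h]
      have h1 : b + 1 - a - 1 = (b - a - 1) + 1 := by omega
      rw [h1, pow_succ]
      ring
    · have : a = b := by omega
      subst this
      rw [show Finset.Ioo a (a + 1) = ∅ by ext x; simp]
      simp [show a + 1 - a - 1 = 0 by omega]

theorem stmt_10 (n : ℕ) (A : Matrix (Fin n) (Fin n) ℂ)
    (hlow : ∀ j k : Fin n, j < k → A j k = 0)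
    (hdiag : ∀ j : Fin n, A j j = 1)
    (hbd : ∀ j k : Fin n, k < j → ‖A j k‖ ≤ 1) :
    ∀ j k : Fin n, k < j → ‖A⁻¹ j k‖ ≤ (2 : ℝ) ^ ((j : ℕ) - (k : ℕ) - 1) := by
  have hA : A.BlockTriangular OrderDual.toDual := fun i j h => hlow i j h
  have hdet : A.det = 1 := by
    rw [Matrix.det_of_lowerTriangular A hA]
    simp [hdiag]
  haveI : Invertible A := A.invertibleOfIsUnitDet (by simp [hdet])
  set B := A⁻¹ with hB
  have hBtri : B.BlockTriangular OrderDual.toDual :=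
    Matrix.blockTriangular_inv_of_blockTriangular hA
  have hBup : ∀ i k : Fin n, i < k → B i k = 0 := fun i k h => hBtri h
  have hAB : A * B = 1 := Matrix.mul_inv_of_invertible A
  -- diagonal of B is 1
  have hBdiag : ∀ k : Fin n, B k k = 1 := by
    intro k
    have h := congrFun (congrFun hAB k) k
    rw [Matrix.mul_apply, Matrix.one_apply_eq] at h
    rw [Finset.sum_eq_single k ?h1 (by simp)] at h
    · rwa [hdiag, one_mul] at h
    case h1 =>
      intro i _ hik
      rcases lt_or_gt_of_ne hik with h1 | h1
      · rw [hBup i k h1, mul_zero]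
      · rw [hlow k i h1, zero_mul]
  -- key recursion
  have hrec : ∀ j k : Fin n, k < j →
      B j k = -∑ i ∈ Finset.univ.erase j, A j i * B i k := by
    intro j k hk
    have h := congrFun (congrFun hAB j) k
    rw [Matrix.mul_apply, Matrix.one_apply_ne (Fin.ne_of_gt hk),
      ← Finset.add_sum_erase _ _ (Finset.mem_univ j), hdiag, one_mul] at h
    exact eq_neg_of_add_eq_zero_left h
  -- main strong induction on the value of j
  have main : ∀ m : ℕ, ∀ j k : Fin n, (j : ℕ) < m → k < j →
      ‖B j k‖ ≤ (2 : ℝ) ^ ((j : ℕ) - (k : ℕ) - 1) := by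
    intro m
    induction m with
    | zero => intro j k hj; omega
    | succ m ih =>
      intro j k hj hk
      rw [hrec j k hk, norm_neg]
      calc ‖∑ i ∈ Finset.univ.erase j, A j i * B i k‖
          ≤ ∑ i ∈ Finset.univ.erase j, ‖A j i‖ * ‖B i k‖ := by
            refine (norm_sum_le _ _).trans ?_
            exact Finset.sum_le_sum fun i _ => (norm_mul _ _).le
        _ = ∑ i ∈ insert k (Finset.Ioo k j), ‖A j i‖ * ‖B i k‖ := by
            symm
            refine Finset.sum_subset ?_ ?_
            · intro i hi
              simp only [Finset.mem_insert, Finset.mem_Ioo] at hi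
              refine Finset.mem_erase.mpr ⟨?_, Finset.mem_univ i⟩
              rcases hi with rfl | ⟨_, h2⟩
              · exact Fin.ne_of_lt hk
              · exact Fin.ne_of_lt h2
            · intro i hi hni
              simp only [Finset.mem_insert, Finset.mem_Ioo, not_or, not_and_or] at hni
              obtain ⟨hik, h2⟩ := hni
              have hij : i ≠ j := (Finset.mem_erase.mp hi).1
              rcases h2 with h2 | h2
              · -- ¬ k < i, so i < k (since i ≠ k): B i k = 0
                have : i < k := lt_of_le_of_ne (not_lt.mp h2) hik
                rw [hBup i k this, norm_zero, mul_zero]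
              · -- ¬ i < j, so j < i: A j i = 0
                have : j < i := lt_of_le_of_ne (not_lt.mp h2) (Ne.symm hij)
                rw [hlow j i this, norm_zero, zero_mul]
        _ ≤ 1 + ∑ i ∈ Finset.Ioo k j, (2 : ℝ) ^ ((i : ℕ) - (k : ℕ) - 1) := by
            rw [Finset.sum_insert (by simp)]
            refine add_le_add ?_ (Finset.sum_le_sum ?_)
            · rw [hBdiag k, norm_one, mul_one]
              exact hbd j k hk
            · intro i hi
              simp only [Finset.mem_Ioo] at hi
              calc ‖A j i‖ * ‖B i k‖ ≤ 1 * ‖B i k‖ :=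
                    mul_le_mul_of_nonneg_right (hbd j i hi.2) (norm_nonneg _)
                _ = ‖B i k‖ := one_mul _
                _ ≤ (2 : ℝ) ^ ((i : ℕ) - (k : ℕ) - 1) := by
                    refine ih i k ?_ hi.1
                    have : (i : ℕ) < (j : ℕ) := hi.2
                    omega
        _ = (2 : ℝ) ^ ((j : ℕ) - (k : ℕ) - 1) := by
            have hmap : ∑ i ∈ Finset.Ioo k j, (2 : ℝ) ^ ((i : ℕ) - (k : ℕ) - 1)
                = ∑ i ∈ Finset.Ioo (k : ℕ) (j : ℕ), (2 : ℝ) ^ (i - (k : ℕ) - 1) := by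
              rw [← Fin.map_valEmbedding_Ioo, Finset.sum_map]
              rfl
            rw [hmap, geo_sum_Ioo _ _ hk]
            ring
  intro j k hk
  exact main ((j : ℕ) + 1) j k (Nat.lt_succ_self _) hk
end

section
/- Let A be an n×n complex lower triangular matrix with diagonal entries 1 and subdiagonal entries of absolute value at most 1, viewed as a linear map on ℂⁿ. Then (1/(2ⁿ−1))𝔻ⁿ ⊆ A(Δⁿ), where Δⁿ = {w ∈ ℂⁿ : |w₁|+⋯+|wₙ| < 1} and 𝔻ⁿ is the unit polydisc. -/
open Finset

noncomputable def wA {n : ℕ} (A : Matrix (Fin n) (Fin n) ℂ) (Z : Fin n → ℂ) (j : Fin n) : ℂ :=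
  Z j - ∑ k ∈ (Finset.Iio j).attach, A j k.1 * wA A Z k.1
  termination_by j.val
  decreasing_by exact Fin.lt_iff_val_lt_val.mp (Finset.mem_Iio.mp k.2)

lemma wA_eq {n : ℕ} (A : Matrix (Fin n) (Fin n) ℂ) (Z : Fin n → ℂ) (j : Fin n) :
    wA A Z j = Z j - ∑ k ∈ Finset.Iio j, A j k * wA A Z k := by
  rw [wA]
  congr 1
  exact Finset.sum_attach (Finset.Iio j) (fun k => A j k * wA A Z k)

lemma sum_Iio_fin {n : ℕ} (j : Fin n) (f : ℕ → ℝ) :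
    ∑ k ∈ Finset.Iio j, f k.val = ∑ m ∈ Finset.range j.val, f m := by
  rw [← Nat.Iio_eq_range, ← Fin.map_valEmbedding_Iio, Finset.sum_map]
  rfl

lemma geom_two {p : ℕ} : ∑ m ∈ Finset.range p, (2:ℝ)^m = 2^p - 1 := by
  induction p with
  | zero => simp
  | succ p ih => rw [Finset.sum_range_succ, ih]; ring

lemma wA_mulVec {n : ℕ} (A : Matrix (Fin n) (Fin n) ℂ)
    (hlow : ∀ j k : Fin n, j < k → A j k = 0)
    (hdiag : ∀ j : Fin n, A j j = 1) (Z : Fin n → ℂ) :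
    A.mulVec (wA A Z) = Z := by
  funext j
  have h0 : A.mulVec (wA A Z) j = ∑ k : Fin n, A j k * wA A Z k := rfl
  have h1 : ∑ k : Fin n, A j k * wA A Z k = ∑ k ∈ Finset.Iic j, A j k * wA A Z k := by
    refine (Finset.sum_subset (Finset.subset_univ _) ?_).symm
    intro k _ hk
    rw [hlow j k (by simpa using hk), zero_mul]
  have h2 : Finset.Iic j = insert j (Finset.Iio j) := (Finset.Iio_insert j).symm
  rw [h0, h1, h2, Finset.sum_insert (by simp), hdiag j, one_mul, wA_eq A Z j]
  ring

lemma wA_bound {n : ℕ} (A : Matrix (Fin n) (Fin n) ℂ)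
    (hbd : ∀ j k : Fin n, k < j → ‖A j k‖ ≤ 1) (Z : Fin n → ℂ)
    (B : ℝ) (hB : ∀ k, ‖Z k‖ ≤ B) (j : Fin n) :
    ‖wA A Z j‖ ≤ 2 ^ j.val * B := by
  have H : ∀ m : ℕ, ∀ j : Fin n, j.val = m → ‖wA A Z j‖ ≤ 2 ^ j.val * B := by
    intro m
    induction m using Nat.strong_induction_on with
    | _ m ih =>
      intro j hj
      rw [wA_eq]
      calc ‖Z j - ∑ k ∈ Finset.Iio j, A j k * wA A Z k‖
          ≤ ‖Z j‖ + ‖∑ k ∈ Finset.Iio j, A j k * wA A Z k‖ := norm_sub_le _ _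
        _ ≤ B + ∑ k ∈ Finset.Iio j, ‖A j k * wA A Z k‖ :=
            add_le_add (hB j) (norm_sum_le _ _)
        _ ≤ B + ∑ k ∈ Finset.Iio j, 2 ^ k.val * B := by
            refine add_le_add le_rfl (Finset.sum_le_sum fun k hk => ?_)
            rw [norm_mul]
            have hk' : k < j := Finset.mem_Iio.mp hk
            have hkm : k.val < m := hj ▸ (Fin.lt_iff_val_lt_val.mp hk')
            calc ‖A j k‖ * ‖wA A Z k‖ ≤ 1 * (2 ^ k.val * B) :=
                  mul_le_mul (hbd j k hk') (ih k.val hkm k rfl) (norm_nonneg _) zero_le_one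
              _ = 2 ^ k.val * B := one_mul _
        _ = B + (2 ^ j.val - 1) * B := by
            rw [show (∑ k ∈ Finset.Iio j, 2 ^ k.val * B) = ∑ m ∈ Finset.range j.val, 2 ^ m * B
                  from sum_Iio_fin j (fun m => 2 ^ m * B), ← Finset.sum_mul, geom_two]
        _ = 2 ^ j.val * B := by ring
  exact H j.val j rfl

theorem stmt_11 (n : ℕ) (A : Matrix (Fin n) (Fin n) ℂ)
    (hlow : ∀ j k : Fin n, j < k → A j k = 0)
    (hdiag : ∀ j : Fin n, A j j = 1)
    (hbd : ∀ j k : Fin n, k < j → ‖A j k‖ ≤ 1) :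
    {Z : Fin n → ℂ | ∀ j, ‖Z j‖ < 1 / ((2 : ℝ) ^ n - 1)} ⊆
      A.mulVec '' {w : Fin n → ℂ | ∑ j, ‖w j‖ < 1} := by
  intro Z hZ
  rcases Nat.eq_zero_or_pos n with hn | hn
  · subst hn
    exact ⟨Z, by simp, funext fun j => j.elim0⟩
  have hne : (Finset.univ : Finset (Fin n)).Nonempty := ⟨⟨0, hn⟩, Finset.mem_univ _⟩
  set B : ℝ := Finset.univ.sup' hne (fun k => ‖Z k‖) with hBdef
  have hB : ∀ k, ‖Z k‖ ≤ B := fun k => Finset.le_sup' (fun k => ‖Z k‖) (Finset.mem_univ k)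
  have hpos : (0:ℝ) < 2 ^ n - 1 := by
    have : (2:ℝ) ^ 1 ≤ 2 ^ n := pow_le_pow_right₀ one_le_two hn
    norm_num at this ⊢; linarith
  have hBlt : B < 1 / ((2:ℝ) ^ n - 1) := by
    rw [hBdef, Finset.sup'_lt_iff]
    intro k _
    exact hZ k
  refine ⟨wA A Z, ?_, wA_mulVec A hlow hdiag Z⟩
  have hsum : ∑ j, ‖wA A Z j‖ ≤ (2 ^ n - 1) * B := by
    calc ∑ j : Fin n, ‖wA A Z j‖ ≤ ∑ j : Fin n, 2 ^ j.val * B :=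
          Finset.sum_le_sum fun j _ => wA_bound A hbd Z B hB j
      _ = ∑ m ∈ Finset.range n, 2 ^ m * B := Fin.sum_univ_eq_sum_range (fun m => (2:ℝ) ^ m * B) n
      _ = (2 ^ n - 1) * B := by rw [← Finset.sum_mul, geom_two]
  have hlt : (2 ^ n - 1 : ℝ) * B < (2 ^ n - 1) * (1 / (2 ^ n - 1)) :=
    (mul_lt_mul_iff_right₀ hpos).mpr hBlt
  have h1 : (2 ^ n - 1 : ℝ) * (1 / (2 ^ n - 1)) = 1 := by field_simp
  simp only [Set.mem_setOf_eq]
  linarith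
end

section
/- Let A be an n×n complex lower triangular matrix with diagonal entries 1 and subdiagonal entries of absolute value at most 1. Set c_n = √(4ⁿ−1)/√3. Then (1/c_n)𝔹ⁿ ⊆ A(Δⁿ), where Δⁿ = {w ∈ ℂⁿ : |w₁|+⋯+|wₙ| < 1} and 𝔹ⁿ is the open Euclidean unit ball in ℂⁿ. -/
noncomputable def wv {n : ℕ} (A : Matrix (Fin n) (Fin n) ℂ) (Z : Fin n → ℂ) : Fin n → ℂ
  | j => Z j - ∑ k ∈ (Finset.Iio j).attach, A j k.1 * wv A Z k.1
termination_by j => j.val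
decreasing_by exact Fin.lt_def.mp (Finset.mem_Iio.mp k.2)

lemma wv_eq {n : ℕ} (A : Matrix (Fin n) (Fin n) ℂ) (Z : Fin n → ℂ) (j : Fin n) :
    wv A Z j = Z j - ∑ k ∈ Finset.Iio j, A j k * wv A Z k := by
  rw [wv]
  exact congrArg (fun t => Z j - t) (Finset.sum_attach _ fun k => A j k * wv A Z k)

lemma wv_mulVec {n : ℕ} (A : Matrix (Fin n) (Fin n) ℂ) (Z : Fin n → ℂ)
    (hlow : ∀ j k : Fin n, j < k → A j k = 0)
    (hdiag : ∀ j : Fin n, A j j = 1) :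
    A.mulVec (wv A Z) = Z := by
  funext j
  have h1 : A.mulVec (wv A Z) j = ∑ k, A j k * wv A Z k := by
    simp [Matrix.mulVec, dotProduct]
  have h2 : ∑ k ∈ Finset.Iic j, A j k * wv A Z k = ∑ k, A j k * wv A Z k := by
    apply Finset.sum_subset (Finset.subset_univ _)
    intro k _ hk
    rw [hlow j k (by simpa using hk), zero_mul]
  rw [h1, ← h2, ← Finset.Iio_insert, Finset.sum_insert Finset.notMem_Iio_self,
    hdiag j, one_mul, wv_eq]
  ring

lemma wv_bound {n : ℕ} (A : Matrix (Fin n) (Fin n) ℂ) (Z : Fin n → ℂ)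
    (hbd : ∀ j k : Fin n, k < j → ‖A j k‖ ≤ 1) :
    ∀ (m : ℕ) (j : Fin n), j.val ≤ m →
      ∑ k ∈ Finset.Iic j, ‖wv A Z k‖ ≤ ∑ k ∈ Finset.Iic j, 2 ^ (j.val - k.val) * ‖Z k‖ := by
  have key : ∀ j : Fin n, ‖wv A Z j‖ ≤ ‖Z j‖ + ∑ k ∈ Finset.Iio j, ‖wv A Z k‖ := by
    intro j
    rw [wv_eq]
    refine (norm_sub_le _ _).trans ?_
    gcongr
    refine (norm_sum_le _ _).trans ?_
    apply Finset.sum_le_sum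
    intro k hk
    rw [norm_mul]
    have := hbd j k (Finset.mem_Iio.mp hk)
    nlinarith [norm_nonneg (wv A Z k)]
  intro m
  induction m with
  | zero =>
    intro j hj
    have hj0 : j.val = 0 := Nat.le_zero.mp hj
    have hIio : Finset.Iio j = ∅ := by
      ext k; simp [Fin.lt_def, hj0]
    rw [← Finset.Iio_insert, Finset.sum_insert Finset.notMem_Iio_self,
      Finset.sum_insert Finset.notMem_Iio_self, hIio]
    simpa using (key j).trans (by rw [hIio]; simp)
  | succ m ih =>
    intro j hj
    rcases Nat.lt_or_ge j.val (m + 1) with h | h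
    · exact ih j (Nat.lt_succ_iff.mp h)
    have hjv : j.val = m + 1 := le_antisymm hj h
    have hm : m < n := by omega
    set j' : Fin n := ⟨m, hm⟩ with hj'
    have hIio : Finset.Iio j = Finset.Iic j' := by
      ext k
      rw [Finset.mem_Iio, Finset.mem_Iic, Fin.lt_def, Fin.le_def, hjv]
      exact Nat.lt_succ_iff
    have ihj : ∑ k ∈ Finset.Iic j', ‖wv A Z k‖ ≤
        ∑ k ∈ Finset.Iic j', 2 ^ (j'.val - k.val) * ‖Z k‖ := ih j' le_rfl
    rw [← Finset.Iio_insert, Finset.sum_insert Finset.notMem_Iio_self,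
      Finset.sum_insert Finset.notMem_Iio_self]
    have h1 : ‖wv A Z j‖ + ∑ k ∈ Finset.Iio j, ‖wv A Z k‖ ≤
        ‖Z j‖ + 2 * ∑ k ∈ Finset.Iic j', ‖wv A Z k‖ := by
      have := key j
      rw [hIio] at this ⊢
      linarith
    refine h1.trans ?_
    have h2 : 2 * ∑ k ∈ Finset.Iic j', ‖wv A Z k‖ ≤
        ∑ k ∈ Finset.Iio j, 2 ^ (j.val - k.val) * ‖Z k‖ := by
      rw [hIio]
      calc 2 * ∑ k ∈ Finset.Iic j', ‖wv A Z k‖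
          ≤ 2 * ∑ k ∈ Finset.Iic j', 2 ^ (j'.val - k.val) * ‖Z k‖ := by linarith
        _ = ∑ k ∈ Finset.Iic j', 2 ^ (j.val - k.val) * ‖Z k‖ := by
            rw [Finset.mul_sum]
            apply Finset.sum_congr rfl
            intro k hk
            have hk' : (k:ℕ) ≤ m := Fin.le_def.mp (Finset.mem_Iic.mp hk)
            have : j.val - k.val = (j'.val - k.val) + 1 := by
              simp only [hj', hjv]; omega
            rw [this, pow_succ]
            ring
    have hzj : (2:ℝ) ^ (j.val - j.val) * ‖Z j‖ = ‖Z j‖ := by simp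
    linarith

theorem stmt_12 (n : ℕ) (A : Matrix (Fin n) (Fin n) ℂ)
    (hlow : ∀ j k : Fin n, j < k → A j k = 0)
    (hdiag : ∀ j : Fin n, A j j = 1)
    (hbd : ∀ j k : Fin n, k < j → ‖A j k‖ ≤ 1) :
    {Z : Fin n → ℂ | Real.sqrt (∑ j, ‖Z j‖ ^ 2) < 1 / (Real.sqrt (4 ^ n - 1) / Real.sqrt 3)} ⊆
      A.mulVec '' {w : Fin n → ℂ | ∑ j, ‖w j‖ < 1} := by
  intro Z hZ
  simp only [Set.mem_setOf_eq] at hZ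
  -- handle n = 0
  rcases Nat.eq_zero_or_pos n with hn0 | hn
  · exfalso
    subst hn0
    simp at hZ
  obtain ⟨n', rfl⟩ : ∃ n', n = n' + 1 := ⟨n - 1, by omega⟩
  set c : ℝ := Real.sqrt (4 ^ (n' + 1) - 1) / Real.sqrt 3 with hc
  have h4 : (1:ℝ) < 4 ^ (n' + 1) := by
    have : (4:ℝ) ^ 0 < 4 ^ (n' + 1) := by
      apply pow_lt_pow_right₀ (by norm_num) (by omega)
    simpa using this
  have hcpos : 0 < c := by
    apply div_pos (Real.sqrt_pos.mpr (by linarith)) (Real.sqrt_pos.mpr (by norm_num))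
  refine ⟨wv A Z, ?_, wv_mulVec A Z hlow hdiag⟩
  simp only [Set.mem_setOf_eq]
  -- bound sum by weighted sum of ‖Z‖
  have huniv : Finset.Iic (Fin.last n') = (Finset.univ : Finset (Fin (n' + 1))) := by
    ext k; simp [Fin.le_last]
  have hb := wv_bound A Z hbd (Fin.last n') (Fin.last n') le_rfl
  rw [huniv] at hb
  have hlastval : (Fin.last n').val = n' := rfl
  -- Cauchy-Schwarz
  have hCS : (∑ k : Fin (n' + 1), 2 ^ (n' - k.val) * ‖Z k‖) ^ 2 ≤
      (∑ k : Fin (n' + 1), ((2:ℝ) ^ (n' - k.val)) ^ 2) * ∑ k : Fin (n' + 1), ‖Z k‖ ^ 2 :=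
    Finset.sum_mul_sq_le_sq_mul_sq _ _ _
  have hgeom : (∑ k : Fin (n' + 1), ((2:ℝ) ^ (n' - k.val)) ^ 2) = (4 ^ (n' + 1) - 1) / 3 := by
    have : ∀ k : Fin (n' + 1), ((2:ℝ) ^ (n' - k.val)) ^ 2 = 4 ^ (n' - k.val) := by
      intro k
      rw [← pow_mul, pow_mul']
      norm_num
    simp_rw [this]
    rw [Fin.sum_univ_eq_sum_range (fun i => (4:ℝ) ^ (n' - i))]
    have := Finset.sum_range_reflect (fun i => (4:ℝ) ^ i) (n' + 1)
    simp only [Nat.add_sub_cancel] at this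
    rw [this]
    rw [geom_sum_eq (by norm_num : (4:ℝ) ≠ 1)]
    norm_num
  have hsq : 0 ≤ ∑ k : Fin (n' + 1), ‖Z k‖ ^ 2 :=
    Finset.sum_nonneg fun k _ => sq_nonneg _
  have hwt : ∑ k : Fin (n' + 1), 2 ^ (n' - k.val) * ‖Z k‖ ≤
      c * Real.sqrt (∑ k : Fin (n' + 1), ‖Z k‖ ^ 2) := by
    have hnn : 0 ≤ ∑ k : Fin (n' + 1), 2 ^ (n' - k.val) * ‖Z k‖ :=
      Finset.sum_nonneg fun k _ => mul_nonneg (by positivity) (norm_nonneg _)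
    have := Real.sqrt_le_sqrt hCS
    rw [Real.sqrt_sq hnn, Real.sqrt_mul (by rw [hgeom]; linarith)] at this
    refine this.trans_eq ?_
    congr 1
    rw [hgeom, hc, Real.sqrt_div (by linarith : (0:ℝ) ≤ 4 ^ (n' + 1) - 1)]
  calc ∑ j, ‖wv A Z j‖ ≤ ∑ k : Fin (n' + 1), 2 ^ (n' - k.val) * ‖Z k‖ := hb
    _ ≤ c * Real.sqrt (∑ k : Fin (n' + 1), ‖Z k‖ ^ 2) := hwt
    _ < c * (1 / c) := by
        apply mul_lt_mul_of_pos_left _ hcpos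
        exact hZ
    _ = 1 := by field_simp
end
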